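/- arXiv:1812.00806 — 4 statements merged into one kernel-verified Lean document; each statement's English description precedes it below -/
import Mathlib

section
/- The function f : ℝ³ → ℝ defined by f(x₁,x₂,x₃) = (x₁x₂x₃)/(x₁⁶+x₂⁶+x₃⁶) for (x₁,x₂,x₃) ≠ 0 and f(0)=0 is real analytic on every translate of each coordinate hyperplane, i.e., for each index i and each constant c ∈ ℝ, the restriction of f to the affine hyperplane {x : xᵢ = c} is real analytic. -/
/-- The function `f(x) = x₁x₂x₃ / (x₁⁶ + x₂⁶ + x₃⁶)` (with `f 0 = 0`) is real analytic
on every translate `{x : xᵢ = c}` of each coordinate hyperplane: fixing the `i`-th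
coordinate to `c`, the resulting function of the remaining two variables is real
analytic on all of `ℝ²`. -/
theorem stmt_1 (f : EuclideanSpace ℝ (Fin 3) → ℝ)
    (hf : ∀ x : EuclideanSpace ℝ (Fin 3), x ≠ 0 →
      f x = (x 0 * x 1 * x 2) / ((x 0) ^ 6 + (x 1) ^ 6 + (x 2) ^ 6))
    (hf0 : f 0 = 0) :
    ∀ (i : Fin 3) (c : ℝ),
      AnalyticOnNhd ℝ
        (fun y : EuclideanSpace ℝ (Fin 2) =>
          f (WithLp.toLp 2 (i.insertNth c (y : Fin 2 → ℝ) : Fin 3 → ℝ) : EuclideanSpace ℝ (Fin 3)))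
        Set.univ := by
  intro i c
  by_cases hc : c = 0
  · subst hc
    have hz : ∀ y : EuclideanSpace ℝ (Fin 2),
        f (WithLp.toLp 2 (i.insertNth 0 (y : Fin 2 → ℝ) : Fin 3 → ℝ) : EuclideanSpace ℝ (Fin 3)) = 0 := by
      intro y
      set x : EuclideanSpace ℝ (Fin 3) :=
        (WithLp.toLp 2 (i.insertNth 0 (y : Fin 2 → ℝ) : Fin 3 → ℝ) : EuclideanSpace ℝ (Fin 3)) with hxdef
      by_cases hx : x = 0
      · rw [hx, hf0]
      · rw [hf _ hx]
        have hi : x i = 0 := by rw [hxdef]; simp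
        have h3 : i = 0 ∨ i = 1 ∨ i = 2 := by omega
        rcases h3 with h | h | h <;> subst h <;> rw [hi] <;> simp
    have : (fun y : EuclideanSpace ℝ (Fin 2) =>
        f (WithLp.toLp 2 (i.insertNth 0 (y : Fin 2 → ℝ) : Fin 3 → ℝ) : EuclideanSpace ℝ (Fin 3)))
        = fun _ => (0 : ℝ) := funext hz
    rw [this]
    exact analyticOnNhd_const
  · -- coordinate functions
    have hg : ∀ j : Fin 3, AnalyticOnNhd ℝ
        (fun y : EuclideanSpace ℝ (Fin 2) =>
          ((i.insertNth c (y : Fin 2 → ℝ) : Fin 3 → ℝ)) j) Set.univ := by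
      intro j
      rcases eq_or_ne j i with h | h
      · subst h
        simp only [Fin.insertNth_apply_same]
        exact analyticOnNhd_const
      · obtain ⟨k, rfl⟩ := Fin.exists_succAbove_eq h
        have h1 : (fun y : EuclideanSpace ℝ (Fin 2) =>
            ((i.insertNth c (y : Fin 2 → ℝ) : Fin 3 → ℝ)) (i.succAbove k))
            = fun y : EuclideanSpace ℝ (Fin 2) => y k := by
          funext y
          simp
        rw [h1]
        exact (EuclideanSpace.proj k : EuclideanSpace ℝ (Fin 2) →L[ℝ] ℝ).analyticOnNhd _
    have hne : ∀ y : EuclideanSpace ℝ (Fin 2),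
        (WithLp.toLp 2 (i.insertNth c (y : Fin 2 → ℝ) : Fin 3 → ℝ) : EuclideanSpace ℝ (Fin 3)) ≠ 0 := by
      intro y h
      apply hc
      have := congrArg (fun z : EuclideanSpace ℝ (Fin 3) => z i) h
      simpa [Fin.insertNth_apply_same] using this
    have hden : ∀ y : EuclideanSpace ℝ (Fin 2),
        ((i.insertNth c (y : Fin 2 → ℝ) : Fin 3 → ℝ) 0) ^ 6 + ((i.insertNth c (y : Fin 2 → ℝ) : Fin 3 → ℝ) 1) ^ 6
          + ((i.insertNth c (y : Fin 2 → ℝ) : Fin 3 → ℝ) 2) ^ 6 ≠ 0 := by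
      intro y
      have hi : (i.insertNth c (y : Fin 2 → ℝ) : Fin 3 → ℝ) i = c := by simp
      have h3 : i = 0 ∨ i = 1 ∨ i = 2 := by omega
      have h0 : ((i.insertNth c (y : Fin 2 → ℝ) : Fin 3 → ℝ) 0) ^ 6 ≥ 0 := by positivity
      have h1 : ((i.insertNth c (y : Fin 2 → ℝ) : Fin 3 → ℝ) 1) ^ 6 ≥ 0 := by positivity
      have h2 : ((i.insertNth c (y : Fin 2 → ℝ) : Fin 3 → ℝ) 2) ^ 6 ≥ 0 := by positivity
      have hc6 : (0:ℝ) < c ^ 6 := by positivity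
      rcases h3 with h | h | h <;> subst h <;> rw [hi] at * <;> nlinarith
    have key : (fun y : EuclideanSpace ℝ (Fin 2) =>
        f (WithLp.toLp 2 (i.insertNth c (y : Fin 2 → ℝ) : Fin 3 → ℝ) : EuclideanSpace ℝ (Fin 3)))
        = fun y : EuclideanSpace ℝ (Fin 2) => ((i.insertNth c (y : Fin 2 → ℝ) : Fin 3 → ℝ) 0 * (i.insertNth c (y : Fin 2 → ℝ) : Fin 3 → ℝ) 1
            * (i.insertNth c (y : Fin 2 → ℝ) : Fin 3 → ℝ) 2)
          / (((i.insertNth c (y : Fin 2 → ℝ) : Fin 3 → ℝ) 0) ^ 6 + ((i.insertNth c (y : Fin 2 → ℝ) : Fin 3 → ℝ) 1) ^ 6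
            + ((i.insertNth c (y : Fin 2 → ℝ) : Fin 3 → ℝ) 2) ^ 6) := by
      funext y
      exact hf _ (hne y)
    rw [key]
    exact AnalyticOnNhd.div (((hg 0).mul (hg 1)).mul (hg 2))
      ((((hg 0).pow 6).add ((hg 1).pow 6)).add ((hg 2).pow 6))
      (fun y _ => hden y)
end

section
/- The function g : ℝ³ → ℝ defined by g(x,y,z) = (x⁸ + y(x²−y³)² + z⁴)/(x¹⁰ + (x²−y³)² + z²) for (x,y,z) ≠ (0,0,0) and g(0,0,0) = 0 is not continuous at the origin. -/
/-- The function `g(x,y,z) = (x⁸ + y(x²−y³)² + z⁴)/(x¹⁰ + (x²−y³)² + z²)`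
(with `g(0,0,0) = 0`) is not continuous at the origin. -/
theorem stmt_2 (g : ℝ × ℝ × ℝ → ℝ)
    (hg : ∀ p : ℝ × ℝ × ℝ, p ≠ 0 →
      g p = (p.1 ^ 8 + p.2.1 * (p.1 ^ 2 - p.2.1 ^ 3) ^ 2 + p.2.2 ^ 4) /
            (p.1 ^ 10 + (p.1 ^ 2 - p.2.1 ^ 3) ^ 2 + p.2.2 ^ 2))
    (hg0 : g 0 = 0) :
    ¬ ContinuousAt g 0 := by
  intro h
  -- the sequence along the curve x = t³, y = t², z = 0 with t = 1/(n+1)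
  set u : ℕ → ℝ × ℝ × ℝ := fun n => ((1 / (n + 1 : ℝ)) ^ 3, (1 / (n + 1 : ℝ)) ^ 2, 0) with hu
  have ht : Filter.Tendsto (fun n : ℕ => 1 / (n + 1 : ℝ)) Filter.atTop (nhds 0) :=
    tendsto_one_div_add_atTop_nhds_zero_nat
  have hu0 : Filter.Tendsto u Filter.atTop (nhds (0 : ℝ × ℝ × ℝ)) := by
    rw [hu]
    have h3 : Filter.Tendsto (fun n : ℕ => (1 / (n + 1 : ℝ)) ^ 3) Filter.atTop (nhds 0) := by
      simpa using ht.pow 3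
    have h2 : Filter.Tendsto (fun n : ℕ => (1 / (n + 1 : ℝ)) ^ 2) Filter.atTop (nhds 0) := by
      simpa using ht.pow 2
    rw [show (0 : ℝ × ℝ × ℝ) = ((0:ℝ), (0:ℝ), (0:ℝ)) from rfl, nhds_prod_eq, nhds_prod_eq]
    exact h3.prodMk (h2.prodMk (tendsto_const_nhds : Filter.Tendsto (fun _ : ℕ => (0 : ℝ)) Filter.atTop (nhds 0)))
  have hgu : Filter.Tendsto (g ∘ u) Filter.atTop (nhds 0) := by
    have := h.tendsto.comp hu0
    rwa [hg0] at this
  -- but g (u n) = (n+1)^6 ≥ 1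
  have hval : ∀ n : ℕ, g (u n) = ((n : ℝ) + 1) ^ 6 := by
    intro n
    have hpos : (0 : ℝ) < (n : ℝ) + 1 := by positivity
    have hne : u n ≠ 0 := by
      intro hcon
      have h1 : (1 / ((n : ℝ) + 1)) ^ 3 = 0 := congrArg Prod.fst hcon
      have : (1 / ((n : ℝ) + 1)) ^ 3 ≠ 0 := by positivity
      exact this h1
    rw [hg (u n) hne]
    simp only [hu]
    have : ((1 / ((n : ℝ) + 1)) ^ 3) ^ 2 - ((1 / ((n : ℝ) + 1)) ^ 2) ^ 3 = 0 := by ring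
    rw [this]
    field_simp
    ring
  have h1 : ∀ n : ℕ, (1 : ℝ) ≤ g (u n) := by
    intro n
    rw [hval n]
    have hn1 : (1 : ℝ) ≤ (n : ℝ) + 1 := by simp [Nat.cast_nonneg]
    calc (1 : ℝ) = 1 ^ 6 := by norm_num
      _ ≤ ((n : ℝ) + 1) ^ 6 := by gcongr
  have := (hgu.eventually (eventually_lt_nhds (by norm_num : (0:ℝ) < 1))).exists
  obtain ⟨n, hn⟩ := this
  exact absurd (h1 n) (not_le.mpr hn)
end

section
/- Let C ⊂ ℝⁿ be an open cone (i.e., ℝ·C = C and C∖{0} is open in ℝⁿ∖{0}), let V ⊂ C be a 2-dimensional linear subspace, and let C_V be the union of all 2-dimensional linear subspaces V' ⊆ C with dim(V' ∩ V) ≥ 1. Then C_V is an open cone contained in C that contains V. -/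
open Submodule Metric

private lemma pair_symm' {E : Type*} [AddCommGroup E] [Module ℝ E] {x y : E}
    (h : LinearIndependent ℝ ![x, y]) : LinearIndependent ℝ ![y, x] := by
  rw [LinearIndependent.pair_iff] at h ⊢
  intro s t hst
  obtain ⟨h1, h2⟩ := h t s (by rw [add_comm]; exact hst)
  exact ⟨h2, h1⟩

private lemma finrank_span_pair' {E : Type*} [AddCommGroup E] [Module ℝ E] {x y : E}
    (h : LinearIndependent ℝ ![x, y]) :
    Module.finrank ℝ (span ℝ ({x, y} : Set E)) = 2 := by
  have := finrank_span_eq_card h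
  rw [show Set.range ![x, y] = {x, y} by
    simp [Matrix.range_cons, Matrix.range_empty, Set.pair_comm]] at this
  simpa using this

private lemma key (n : ℕ) (C : Set (Fin n → ℝ))
    (hcone : ∀ (t : ℝ), ∀ x ∈ C, t • x ∈ C)
    (hopen : IsOpen (C \ {0}))
    (V : Submodule ℝ (Fin n → ℝ)) (hV : Module.finrank ℝ V = 2)
    (hVC : (V : Set (Fin n → ℝ)) ⊆ C)
    (x w : Fin n → ℝ) (hwV : w ∈ V)
    (hli : LinearIndependent ℝ ![x, w])
    (hsubC : (span ℝ ({x, w} : Set (Fin n → ℝ)) : Set (Fin n → ℝ)) ⊆ C) :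
    {y | ∃ W : Submodule ℝ (Fin n → ℝ), Module.finrank ℝ W = 2 ∧
      (W : Set (Fin n → ℝ)) ⊆ C ∧ 1 ≤ Module.finrank ℝ ↥(W ⊓ V) ∧ y ∈ W} \ {0}
      ∈ nhds x := by
  have hx0 : x ≠ 0 := hli.ne_zero 0
  have hw0 : w ≠ 0 := hli.ne_zero 1
  have h0C : (0 : Fin n → ℝ) ∈ C := by
    simpa using hcone 0 x (hsubC (subset_span (Set.mem_insert _ _)))
  -- the compactness argument
  set g : ℝ × ℝ → (Fin n → ℝ) := fun p => p.1 • x + p.2 • w with hg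
  have hgc : Continuous g := by fun_prop
  have hK : IsCompact (g '' sphere (0 : ℝ × ℝ) 1) :=
    (isCompact_sphere 0 1).image hgc
  have hKsub : g '' sphere (0 : ℝ × ℝ) 1 ⊆ C \ {0} := by
    rintro - ⟨p, hp, rfl⟩
    refine ⟨hsubC ?_, ?_⟩
    · exact Submodule.add_mem _ (Submodule.smul_mem _ _ (subset_span (Set.mem_insert _ _)))
        (Submodule.smul_mem _ _ (subset_span (Set.mem_insert_of_mem _ rfl)))
    · simp only [Set.mem_singleton_iff]
      intro h
      obtain ⟨h1, h2⟩ := LinearIndependent.pair_iff.mp hli p.1 p.2 h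
      have : p = 0 := Prod.ext h1 h2
      rw [this] at hp
      simp at hp
  obtain ⟨δ, hδ, hth⟩ := hK.exists_thickening_subset_open hopen hKsub
  -- for y close to x, span {y, w} ⊆ C
  have hspan : ∀ y : Fin n → ℝ, dist y x < δ →
      (span ℝ ({y, w} : Set (Fin n → ℝ)) : Set (Fin n → ℝ)) ⊆ C := by
    intro y hy z hz
    rw [SetLike.mem_coe, Submodule.mem_span_pair] at hz
    obtain ⟨a, b, rfl⟩ := hz
    by_cases hab : (a, b) = (0, 0)
    · have ha : a = 0 := congrArg Prod.fst hab
      have hb : b = 0 := congrArg Prod.snd hab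
      simpa [ha, hb] using h0C
    · set r := ‖((a, b) : ℝ × ℝ)‖ with hr
      have hrpos : 0 < r := norm_pos_iff.mpr hab
      set p : ℝ × ℝ := r⁻¹ • (a, b) with hp
      have hpsph : p ∈ sphere (0 : ℝ × ℝ) 1 := by
        simp only [mem_sphere_iff_norm, sub_zero, hp, norm_smul, norm_inv, norm_norm]
        rw [Real.norm_eq_abs, abs_of_pos hrpos, inv_mul_cancel₀ hrpos.ne']
      have hu : p.1 • y + p.2 • w ∈ C \ {0} := by
        apply hth
        rw [mem_thickening_iff]
        refine ⟨g p, ⟨p, hpsph, rfl⟩, ?_⟩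
        have : p.1 • y + p.2 • w - g p = p.1 • (y - x) := by
          simp only [hg, smul_sub]
          abel
        rw [dist_eq_norm, this, norm_smul]
        have h1 : |p.1| ≤ 1 := by
          have := norm_fst_le p
          rw [mem_sphere_iff_norm, sub_zero] at hpsph
          simpa [hpsph] using this.trans_eq hpsph
        calc |p.1| * ‖y - x‖ ≤ 1 * ‖y - x‖ := by
              apply mul_le_mul_of_nonneg_right h1 (norm_nonneg _)
          _ = ‖y - x‖ := one_mul _
          _ < δ := by rwa [← dist_eq_norm]
      have : a • y + b • w = r • (p.1 • y + p.2 • w) := by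
        simp only [hp, Prod.smul_fst, Prod.smul_snd, smul_eq_mul]
        rw [smul_add, smul_smul, smul_smul, mul_inv_cancel_left₀ hrpos.ne',
          mul_inv_cancel_left₀ hrpos.ne']
      rw [this]
      exact hcone r _ hu.1
  rw [Metric.mem_nhds_iff]
  refine ⟨min δ ‖x‖, lt_min hδ (norm_pos_iff.mpr hx0), ?_⟩
  intro y hy
  rw [mem_ball, lt_min_iff] at hy
  obtain ⟨hyδ, hyx⟩ := hy
  have hy0 : y ≠ 0 := by
    intro h
    rw [h, dist_zero_left] at hyx
    exact lt_irrefl _ hyx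
  refine ⟨?_, hy0⟩
  by_cases hyw : y ∈ span ℝ ({w} : Set (Fin n → ℝ))
  · -- y ∈ V, use V itself
    refine ⟨V, hV, hVC, ?_, ?_⟩
    · rw [inf_idem, hV]; norm_num
    · exact (Submodule.span_singleton_le_iff_mem w V).mpr hwV hyw
  · -- span {y, w} works
    have hyli : LinearIndependent ℝ ![y, w] := by
      rw [linearIndependent_fin2]
      refine ⟨hw0, fun a ha => hyw ?_⟩
      rw [Submodule.mem_span_singleton]
      exact ⟨a, ha⟩
    refine ⟨span ℝ ({y, w} : Set (Fin n → ℝ)), finrank_span_pair' hyli, hspan y hyδ, ?_, ?_⟩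
    · have hwm : w ∈ span ℝ ({y, w} : Set (Fin n → ℝ)) ⊓ V :=
        ⟨subset_span (Set.mem_insert_of_mem _ rfl), hwV⟩
      have : Nontrivial ↥(span ℝ ({y, w} : Set (Fin n → ℝ)) ⊓ V) :=
        ⟨⟨w, hwm⟩, 0, by simp [Subtype.ext_iff, hw0]⟩
      have := Module.finrank_pos (R := ℝ) (M := ↥(span ℝ ({y, w} : Set (Fin n → ℝ)) ⊓ V))
      omega
    · exact subset_span (Set.mem_insert _ _)

/-- Claim 2 of the paper. Let `C ⊆ ℝⁿ` be an open cone, `V ⊆ C` a 2-dimensional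
linear subspace, and `C_V` the union of all 2-dimensional linear subspaces
`V' ⊆ C` meeting `V` in (at least) a line.  Then `C_V` is an open cone with
`V ⊆ C_V ⊆ C`. -/
theorem stmt_5 (n : ℕ) (C : Set (Fin n → ℝ))
    (hcone : ∀ (t : ℝ), ∀ x ∈ C, t • x ∈ C)
    (hopen : IsOpen (C \ {0}))
    (V : Submodule ℝ (Fin n → ℝ)) (hV : Module.finrank ℝ V = 2)
    (hVC : (V : Set (Fin n → ℝ)) ⊆ C)
    (CV : Set (Fin n → ℝ))
    (hCV : CV = {x | ∃ W : Submodule ℝ (Fin n → ℝ), Module.finrank ℝ W = 2 ∧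
      (W : Set (Fin n → ℝ)) ⊆ C ∧ 1 ≤ Module.finrank ℝ ↥(W ⊓ V) ∧ x ∈ W}) :
    (∀ (t : ℝ), ∀ x ∈ CV, t • x ∈ CV) ∧ IsOpen (CV \ {0}) ∧
      CV ⊆ C ∧ (V : Set (Fin n → ℝ)) ⊆ CV := by
  subst hCV
  refine ⟨?_, ?_, ?_, ?_⟩
  · rintro t x ⟨W, h2, hsub, hmeet, hxW⟩
    exact ⟨W, h2, hsub, hmeet, W.smul_mem t hxW⟩
  · rw [isOpen_iff_mem_nhds]
    rintro x ⟨⟨W, h2, hsub, hmeet, hxW⟩, hx0⟩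
    simp only [Set.mem_singleton_iff] at hx0
    -- find a nonzero vector in W ⊓ V
    obtain ⟨v, hvWV, hv0⟩ : ∃ v ∈ W ⊓ V, v ≠ 0 := by
      rw [← Submodule.ne_bot_iff]
      intro h
      rw [h] at hmeet
      simp [finrank_bot] at hmeet
    by_cases hxv : x ∈ span ℝ ({v} : Set (Fin n → ℝ))
    · -- x ∈ V; pick w' ∈ V independent from x
      have hxV : x ∈ V := (Submodule.span_singleton_le_iff_mem v V).mpr hvWV.2 hxv
      obtain ⟨w', hw'V, hw'x⟩ : ∃ w' ∈ V, w' ∉ span ℝ ({x} : Set (Fin n → ℝ)) := by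
        by_contra h
        push_neg at h
        have hle : V ≤ span ℝ ({x} : Set (Fin n → ℝ)) := h
        have := Submodule.finrank_mono hle
        rw [hV, finrank_span_singleton hx0] at this
        omega
      have hli : LinearIndependent ℝ ![x, w'] := by
        apply pair_symm'
        rw [linearIndependent_fin2]
        refine ⟨hx0, fun a ha => hw'x ?_⟩
        rw [Submodule.mem_span_singleton]
        exact ⟨a, ha⟩
      apply key n C hcone hopen V hV hVC x w' hw'V hli
      refine subset_trans ?_ hVC
      apply Submodule.span_le.mpr
      rw [Set.insert_subset_iff]
      exact ⟨hxV, Set.singleton_subset_iff.mpr hw'V⟩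
    · -- x, v independent, use span {x, v} ≤ W
      have hli : LinearIndependent ℝ ![x, v] := by
        rw [linearIndependent_fin2]
        refine ⟨hv0, fun a ha => hxv ?_⟩
        rw [Submodule.mem_span_singleton]
        exact ⟨a, ha⟩
      apply key n C hcone hopen V hV hVC x v hvWV.2 hli
      refine subset_trans ?_ hsub
      apply Submodule.span_le.mpr
      rw [Set.insert_subset_iff]
      exact ⟨hxW, Set.singleton_subset_iff.mpr hvWV.1⟩
  · rintro x ⟨W, h2, hsub, hmeet, hxW⟩
    exact hsub hxW
  · intro x hx
    exact ⟨V, hV, hVC, by rw [inf_idem, hV]; norm_num, hx⟩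
end

section
/- Let f : ℝⁿ → ℝ (n ≥ 2) be a function such that for every 1-dimensional linear subspace L of ℝⁿ, the restriction of f to L is real analytic at the origin, and suppose for every 2-dimensional linear subspace V and every r ≥ 0 the function τ_r(p) := (d^r/dt^r)|_{t=0} f(tp) restricts to a homogeneous polynomial of degree r on V. Then each τ_r is a homogeneous polynomial of degree r on ℝⁿ. -/
open MvPolynomial Polynomial Module

-- eval of homogeneous polynomial scales
lemma aux_eval_smul {n r : ℕ} {g : MvPolynomial (Fin n) ℝ} (hg : g.IsHomogeneous r)
    (c : ℝ) (x : Fin n → ℝ) :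
    MvPolynomial.eval (c • x) g = c ^ r * MvPolynomial.eval x g := by
  conv_lhs => rw [g.as_sum]
  conv_rhs => rw [g.as_sum]
  rw [map_sum, map_sum, Finset.mul_sum]
  refine Finset.sum_congr rfl fun m hm => ?_
  have hdeg : Finsupp.degree m = r := by
    have := hg (MvPolynomial.mem_support_iff.mp hm)
    rwa [Pi.one_def, ← Finsupp.degree_eq_weight_one] at this
  rw [MvPolynomial.eval_monomial, MvPolynomial.eval_monomial]
  unfold Finsupp.prod
  have : ∀ j ∈ m.support, (c • x) j ^ m j = c ^ m j * x j ^ m j := by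
    intro j _; simp [mul_pow]
  rw [Finset.prod_congr rfl this, Finset.prod_mul_distrib, Finset.prod_pow_eq_pow_sum]
  unfold Finsupp.degree at hdeg
  rw [show ∑ i ∈ m.support, m i = r from hdeg]
  ring

-- enlarge a proper subspace by one dimension
lemma aux_grow {n : ℕ} (S : Submodule ℝ (Fin n → ℝ)) (h : finrank ℝ S < n) :
    ∃ T : Submodule ℝ (Fin n → ℝ), S ≤ T ∧ finrank ℝ T = finrank ℝ S + 1 := by
  have htop : finrank ℝ (⊤ : Submodule ℝ (Fin n → ℝ)) = n := by
    simp [finrank_top, Module.finrank_pi]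
  have hne : S ≠ ⊤ := by
    intro hS; rw [hS, htop] at h; omega
  obtain ⟨m, hm⟩ : ∃ m, m ∉ S := by
    by_contra hc
    push_neg at hc
    exact hne (Submodule.eq_top_iff'.mpr hc)
  have hm0 : m ≠ 0 := fun h0 => hm (h0 ▸ S.zero_mem)
  refine ⟨S ⊔ Submodule.span ℝ {m}, le_sup_left, ?_⟩
  have hinf : S ⊓ Submodule.span ℝ {m} = ⊥ := by
    rw [Submodule.eq_bot_iff]
    rintro x ⟨hxS, hxm⟩
    obtain ⟨c, rfl⟩ := Submodule.mem_span_singleton.mp hxm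
    by_contra hx
    have hc : c ≠ 0 := fun h0 => hx (by simp [h0])
    have : m ∈ S := by
      have := S.smul_mem c⁻¹ hxS
      rwa [smul_smul, inv_mul_cancel₀ hc, one_smul] at this
    exact hm this
  have := Submodule.finrank_sup_add_finrank_inf_eq S (Submodule.span ℝ {m})
  rw [hinf, finrank_span_singleton hm0] at this
  simpa using this

lemma aux_exists_plane {n : ℕ} (hn : 2 ≤ n) (a b : Fin n → ℝ) :
    ∃ W : Submodule ℝ (Fin n → ℝ), finrank ℝ W = 2 ∧ a ∈ W ∧ b ∈ W := by
  set S : Submodule ℝ (Fin n → ℝ) := Submodule.span ℝ {a, b} with hS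
  have haS : a ∈ S := Submodule.subset_span (by simp)
  have hbS : b ∈ S := Submodule.subset_span (by simp)
  have hle : finrank ℝ S ≤ 2 := by
    have h1 := finrank_span_finset_le_card (R := ℝ) ({a, b} : Finset (Fin n → ℝ))
    have h2 : ((({a, b} : Finset (Fin n → ℝ)) : Set (Fin n → ℝ))) = ({a, b} : Set (Fin n → ℝ)) := by
      simp
    rw [h2] at h1
    calc finrank ℝ S ≤ ({a, b} : Finset (Fin n → ℝ)).card := h1
      _ ≤ 2 := (Finset.card_insert_le _ _).trans (by simp)
  rcases Nat.lt_or_ge (finrank ℝ S) 2 with h2 | h2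
  · obtain ⟨T, hST, hT⟩ := aux_grow S (lt_of_lt_of_le h2 hn)
    rcases Nat.lt_or_ge (finrank ℝ T) 2 with h3 | h3
    · obtain ⟨U, hTU, hU⟩ := aux_grow T (lt_of_lt_of_le h3 hn)
      refine ⟨U, ?_, hTU (hST haS), hTU (hST hbS)⟩
      omega
    · exact ⟨T, by omega, hST haS, hST hbS⟩
  · exact ⟨S, le_antisymm hle h2, haS, hbS⟩

/-- Substituting a parametrized line into an `MvPolynomial`. -/
noncomputable def lineEval {n : ℕ} (x y : Fin n → ℝ) (g : MvPolynomial (Fin n) ℝ) :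
    Polynomial ℝ :=
  MvPolynomial.aeval (fun j => Polynomial.C (x j) + Polynomial.C (y j) * Polynomial.X) g

lemma lineEval_eval {n : ℕ} (x y : Fin n → ℝ) (g : MvPolynomial (Fin n) ℝ) (t : ℝ) :
    (lineEval x y g).eval t = MvPolynomial.eval (x + t • y) g := by
  unfold lineEval
  rw [← Polynomial.coe_aeval_eq_eval,
    MvPolynomial.comp_aeval_apply (f := fun j => Polynomial.C (x j) + Polynomial.C (y j) * Polynomial.X)
      (Polynomial.aeval (R := ℝ) t) g]
  have h4 : (fun i => (Polynomial.aeval (R := ℝ) t)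
      (Polynomial.C (x i) + Polynomial.C (y i) * Polynomial.X)) = (x + t • y) := by
    funext i
    simp only [map_add, Polynomial.aeval_C, map_mul, Polynomial.aeval_X,
      Algebra.algebraMap_self_apply, Pi.add_apply, Pi.smul_apply, smul_eq_mul]
    ring
  rw [h4, MvPolynomial.aeval_def, MvPolynomial.eval]
  rfl

lemma lineEval_natDegree_le {n r : ℕ} (x y : Fin n → ℝ) {g : MvPolynomial (Fin n) ℝ}
    (hg : g.IsHomogeneous r) : (lineEval x y g).natDegree ≤ r := by
  unfold lineEval
  conv_lhs => rw [g.as_sum]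
  rw [map_sum]
  apply Polynomial.natDegree_sum_le_of_forall_le
  intro m hm
  have hdeg : Finsupp.degree m = r := by
    have := hg (MvPolynomial.mem_support_iff.mp hm)
    rwa [Pi.one_def, ← Finsupp.degree_eq_weight_one] at this
  rw [MvPolynomial.aeval_monomial]
  refine (Polynomial.natDegree_mul_le).trans ?_
  have h1 : ((algebraMap ℝ (Polynomial ℝ)) (MvPolynomial.coeff m g)).natDegree = 0 := by
    simp [Polynomial.natDegree_C]
  rw [h1, zero_add]
  unfold Finsupp.prod
  refine (Polynomial.natDegree_prod_le _ _).trans ?_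
  rw [← hdeg]
  unfold Finsupp.degree
  apply Finset.sum_le_sum
  intro i _
  refine (Polynomial.natDegree_pow_le).trans ?_
  have : (Polynomial.C (x i) + Polynomial.C (y i) * Polynomial.X).natDegree ≤ 1 := by
    refine (Polynomial.natDegree_add_le _ _).trans ?_
    simp only [Polynomial.natDegree_C, max_le_iff]
    exact ⟨Nat.zero_le _, (Polynomial.natDegree_C_mul_le _ _).trans (by simp)⟩
  calc m i * (Polynomial.C (x i) + Polynomial.C (y i) * Polynomial.X).natDegree
      ≤ m i * 1 := Nat.mul_le_mul_left _ this
    _ = m i := mul_one _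

/-- A function that is a polynomial of degree ≤ r in each variable separately
is given by a multivariate polynomial. -/
lemma aux_sep_poly (N : ℕ) (r : ℕ) (F : (Fin N → ℝ) → ℝ)
    (hF : ∀ (x : Fin N → ℝ) (i : Fin N), ∃ p : Polynomial ℝ, p.natDegree ≤ r ∧
      ∀ t : ℝ, F (Function.update x i t) = p.eval t) :
    ∃ g : MvPolynomial (Fin N) ℝ, ∀ x, MvPolynomial.eval x g = F x := by
  induction N with
  | zero =>
    refine ⟨MvPolynomial.C (F (fun i => i.elim0)), fun x => ?_⟩
    have hx : x = (fun i => i.elim0) := funext fun i => i.elim0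
    rw [MvPolynomial.eval_C, hx]
  | succ N ih =>
    -- for each value of the first coordinate, get a polynomial in the remaining variables
    have hsub : ∀ c : ℝ, ∃ g : MvPolynomial (Fin N) ℝ,
        ∀ x', MvPolynomial.eval x' g = F (Fin.cons c x') := by
      intro c
      apply ih (fun x' => F (Fin.cons c x'))
      intro x' i
      obtain ⟨p, hdeg, hev⟩ := hF (Fin.cons c x') i.succ
      refine ⟨p, hdeg, fun t => ?_⟩
      rw [Fin.cons_update]
      exact hev t
    choose gc hgc using hsub
    -- interpolation nodes 0,1,...,r
    set s : Finset ℝ := (Finset.range (r + 1)).image (Nat.cast : ℕ → ℝ) with hs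
    have hcard : s.card = r + 1 := by
      rw [hs, Finset.card_image_of_injective _ Nat.cast_injective, Finset.card_range]
    have hinj : Set.InjOn id (s : Set ℝ) := fun a _ b _ h => h
    refine ⟨∑ c ∈ s, (Polynomial.aeval (MvPolynomial.X 0 : MvPolynomial (Fin (N+1)) ℝ)
        (Lagrange.basis s id c)) * MvPolynomial.rename Fin.succ (gc c), fun x => ?_⟩
    obtain ⟨p, hdeg, hev⟩ := hF x 0
    have hvals : ∀ c : ℝ, F (Fin.cons c (Fin.tail x)) = p.eval c := by
      intro c
      have : Function.update x 0 c = Fin.cons c (Fin.tail x) := by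
        conv_lhs => rw [← Fin.cons_self_tail x]
        rw [Fin.update_cons_zero]
      rw [← this]
      exact hev c
    rw [map_sum]
    have hterm : ∀ c ∈ s,
        MvPolynomial.eval x ((Polynomial.aeval (MvPolynomial.X 0 : MvPolynomial (Fin (N+1)) ℝ)
          (Lagrange.basis s id c)) * MvPolynomial.rename Fin.succ (gc c))
        = p.eval c * (Lagrange.basis s id c).eval (x 0) := by
      intro c _
      rw [map_mul]
      have h1 : MvPolynomial.eval x ((Polynomial.aeval
          (MvPolynomial.X 0 : MvPolynomial (Fin (N+1)) ℝ) (Lagrange.basis s id c)))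
          = (Lagrange.basis s id c).eval (x 0) := by
        have e1 : MvPolynomial.eval x ((Polynomial.aeval
            (MvPolynomial.X 0 : MvPolynomial (Fin (N+1)) ℝ) (Lagrange.basis s id c)))
            = MvPolynomial.aeval x ((Polynomial.aeval
            (MvPolynomial.X 0 : MvPolynomial (Fin (N+1)) ℝ) (Lagrange.basis s id c))) := by
          rw [MvPolynomial.aeval_def, MvPolynomial.eval]; rfl
        rw [e1, ← Polynomial.aeval_algHom_apply, MvPolynomial.aeval_X,
          Polynomial.coe_aeval_eq_eval]
      have h2 : MvPolynomial.eval x (MvPolynomial.rename Fin.succ (gc c))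
          = F (Fin.cons c (Fin.tail x)) := by
        rw [MvPolynomial.eval_rename]
        exact hgc c (x ∘ Fin.succ)
      rw [h1, h2, hvals c]
      ring
    rw [Finset.sum_congr rfl hterm]
    -- Lagrange interpolation identity
    have hdlt : p.degree < s.card := by
      rw [hcard]
      exact lt_of_le_of_lt Polynomial.degree_le_natDegree
        (by exact_mod_cast Nat.lt_succ_of_le hdeg)
    have hinterp := Lagrange.eq_interpolate (v := id) hinj hdlt
    have := congrArg (Polynomial.eval (x 0)) hinterp
    rw [Lagrange.interpolate_apply, Polynomial.eval_finset_sum] at this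
    simp only [Polynomial.eval_mul, Polynomial.eval_C, id] at this
    rw [← this]
    have : Function.update x 0 (x 0) = x := Function.update_eq_self 0 x
    rw [← hvals (x 0), Fin.cons_self_tail]

/-- If `f : ℝⁿ → ℝ` (`n ≥ 2`) is real analytic at the origin on every line through `0`,
and for every `r` the function `τ_r(p) = (dʳ/dtʳ)|₀ f(tp)` restricts to a degree-`r`
homogeneous polynomial on every 2-dimensional linear subspace, then each `τ_r` is a
degree-`r` homogeneous polynomial on all of `ℝⁿ`. -/
theorem stmt_11 (n : ℕ) (hn : 2 ≤ n) (f : (Fin n → ℝ) → ℝ)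
    (hline : ∀ p : Fin n → ℝ, p ≠ 0 → AnalyticAt ℝ (fun t : ℝ => f (t • p)) 0)
    (τ : ℕ → (Fin n → ℝ) → ℝ)
    (hτ : ∀ (r : ℕ) (p : Fin n → ℝ), p ≠ 0 →
      τ r p = iteratedDeriv r (fun t : ℝ => f (t • p)) 0)
    (hτ0 : ∀ r : ℕ, 1 ≤ r → τ r 0 = 0) (hτ00 : τ 0 0 = f 0)
    (hplane : ∀ (W : Submodule ℝ (Fin n → ℝ)), Module.finrank ℝ W = 2 → ∀ r : ℕ,
      ∃ g : MvPolynomial (Fin n) ℝ, g.IsHomogeneous r ∧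
        ∀ x ∈ W, MvPolynomial.eval x g = τ r x) :
    ∀ r : ℕ, ∃ g : MvPolynomial (Fin n) ℝ, g.IsHomogeneous r ∧
      ∀ x : Fin n → ℝ, MvPolynomial.eval x g = τ r x := by
  intro r
  -- τ r is a polynomial of degree ≤ r along each axis-parallel line
  have hsep : ∀ (x : Fin n → ℝ) (i : Fin n), ∃ p : Polynomial ℝ, p.natDegree ≤ r ∧
      ∀ t : ℝ, τ r (Function.update x i t) = p.eval t := by
    intro x i
    obtain ⟨W, hW2, ha, hb⟩ := aux_exists_plane hn (Function.update x i 0) (Pi.single i 1)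
    obtain ⟨g, hg, hgev⟩ := hplane W hW2 r
    refine ⟨lineEval (Function.update x i 0) (Pi.single i 1) g,
      lineEval_natDegree_le _ _ hg, fun t => ?_⟩
    have hupd : Function.update x i t
        = Function.update x i 0 + t • (Pi.single i 1 : Fin n → ℝ) := by
      funext j
      by_cases h : j = i
      · subst h; simp [Pi.single_eq_same]
      · have h1 : Function.update x i t j = x j := Function.update_of_ne h _ _
        have h2 : Function.update x i 0 j = x j := Function.update_of_ne h _ _
        have h3 : (Pi.single i (1:ℝ) : Fin n → ℝ) j = 0 := Pi.single_eq_of_ne h _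
        simp [h1, h2, h3]
    rw [hupd, lineEval_eval]
    exact (hgev _ (W.add_mem ha (W.smul_mem t hb))).symm
  obtain ⟨g₀, hg₀⟩ := aux_sep_poly n r (τ r) hsep
  -- τ r is homogeneous of degree r as a function
  have hhom : ∀ (c : ℝ) (x : Fin n → ℝ), τ r (c • x) = c ^ r * τ r x := by
    intro c x
    obtain ⟨W, hW2, hx, -⟩ := aux_exists_plane hn x x
    obtain ⟨g, hg, hgev⟩ := hplane W hW2 r
    rw [← hgev x hx, ← hgev (c • x) (W.smul_mem c hx), aux_eval_smul hg]
  refine ⟨MvPolynomial.homogeneousComponent r g₀,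
    MvPolynomial.homogeneousComponent_isHomogeneous r g₀, fun x => ?_⟩
  set D := g₀.totalDegree with hD
  set q : Polynomial ℝ := ∑ d ∈ Finset.range (D + 1),
      Polynomial.C (MvPolynomial.eval x (MvPolynomial.homogeneousComponent d g₀)) *
        Polynomial.X ^ d with hq
  have hqeval : ∀ t : ℝ, q.eval t = (Polynomial.C (τ r x) * Polynomial.X ^ r).eval t := by
    intro t
    rw [hq, Polynomial.eval_finset_sum]
    simp only [Polynomial.eval_mul, Polynomial.eval_C, Polynomial.eval_pow, Polynomial.eval_X]
    have hterm : ∀ d ∈ Finset.range (D + 1),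
        MvPolynomial.eval x (MvPolynomial.homogeneousComponent d g₀) * t ^ d
          = MvPolynomial.eval (t • x) (MvPolynomial.homogeneousComponent d g₀) := by
      intro d _
      rw [aux_eval_smul (MvPolynomial.homogeneousComponent_isHomogeneous d g₀) t x]
      ring
    rw [Finset.sum_congr rfl hterm, ← map_sum, MvPolynomial.sum_homogeneousComponent,
      hg₀, hhom t x]
    ring
  have hq2 : q = Polynomial.C (τ r x) * Polynomial.X ^ r := Polynomial.funext hqeval
  have hcoeff := congrArg (fun p => Polynomial.coeff p r) hq2
  simp only [hq, Polynomial.finset_sum_coeff, Polynomial.coeff_C_mul, Polynomial.coeff_X_pow,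
    mul_ite, mul_one, mul_zero, Finset.sum_ite_eq, Finset.mem_range] at hcoeff
  by_cases hrD : r < D + 1
  · simpa [hrD] using hcoeff
  · have hrD' : ¬ r < g₀.totalDegree + 1 := by rwa [hD] at hrD
    have hzero : MvPolynomial.homogeneousComponent r g₀ = 0 :=
      MvPolynomial.homogeneousComponent_eq_zero r g₀ (by omega)
    rw [hzero]
    simp only [hrD, if_false] at hcoeff
    simpa using hcoeff
end
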